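/- Let d > 2 and let d̃ be the largest even integer with d̃ ≤ d. Then the proportion in S_d of permutations having exactly one 2-cycle and all other cycles of odd length equals [(d̃-3)!!]² / (2·(d̃-2)!), and this quantity is strictly greater than 1/(4√d). -/

import Mathlib

open Equiv Equiv.Perm Finset

namespace Stmt6

variable {α : Type*} [DecidableEq α] [Fintype α]

/-- Inserting a new point `x` into the cycle `c` at `y` yields a cycle with one more point. -/
lemma insert_point_cycle {c : Perm α} (hc : c.IsCycle) {x y : α}
    (hy : y ∈ c.support) (hx : x ∉ c.support) :
    (swap x y * c).IsCycle ∧ (swap x y * c).support = insert x c.support := by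
  classical
  have hcy : c y ≠ y := mem_support.mp hy
  have hcx : c x = x := notMem_support.mp hx
  have hnd : (c.toList y).Nodup := Equiv.Perm.nodup_toList c y
  have hxl : x ∉ c.toList y := by
    intro hmem
    rw [Equiv.Perm.mem_toList_iff] at hmem
    exact hcy (hmem.1.apply_eq_self_iff.mpr hcx)
  have hlen : 2 ≤ (c.toList y).length := Equiv.Perm.two_le_length_toList_iff_mem_support.mpr hy
  have hform : (c.toList y).formPerm = c := by
    rw [Equiv.Perm.formPerm_toList, hc.cycleOf_eq hcy]
  obtain ⟨t, ht⟩ : ∃ t, c.toList y = y :: t := by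
    have h0 := Equiv.Perm.toList_getElem_zero c y hy
    cases hcl : c.toList y with
    | nil => rw [hcl] at hlen; simp at hlen
    | cons a t =>
      have ha : a = y := by simpa [hcl] using h0
      exact ⟨t, by rw [ha]⟩
  have hxt : (x :: c.toList y).formPerm = swap x y * c := by
    rw [ht, List.formPerm_cons_cons, ← ht, hform]
  have hndx : (x :: c.toList y).Nodup := List.nodup_cons.mpr ⟨hxl, hnd⟩
  have hlenx : 2 ≤ (x :: c.toList y).length := by
    simp only [List.length_cons]; omega
  constructor
  · rw [← hxt]
    exact List.isCycle_formPerm hndx hlenx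
  · rw [← hxt, List.support_formPerm_of_nodup _ hndx (by
      intro z hz
      apply_fun List.length at hz
      simp at hz; simp [hz] at hlen)]
    have hsl : (c.toList y).toFinset = c.support := by
      conv_rhs => rw [← hform]
      rw [List.support_formPerm_of_nodup _ hnd (by
        intro z hz; apply_fun List.length at hz
        simp at hz; simp [hz] at hlen)]
    simp [List.toFinset_cons, hsl]

end Stmt6

namespace Stmt6
open Equiv Equiv.Perm Finset
variable {α : Type*} [DecidableEq α] [Fintype α]

lemma key_fixed {f : Perm α} {x y : α} (hx : f x = x) (hy : f y = y) (hxy : x ≠ y) :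
    (swap x y * f).cycleType = 2 ::ₘ f.cycleType ∧
    ((swap x y * f).cycleOf x).support.card = 2 := by
  classical
  have hd : (swap x y).Disjoint f := by
    intro a
    by_cases ha : a = x ∨ a = y
    · rcases ha with rfl | rfl
      · exact Or.inr hx
      · exact Or.inr hy
    · push_neg at ha
      exact Or.inl (swap_apply_of_ne_of_ne ha.1 ha.2)
  have hsc : (swap x y).IsCycle := isCycle_swap hxy
  constructor
  · rw [hd.cycleType_mul, hsc.cycleType, card_support_swap hxy]
    rfl
  · rw [hd.cycleOf_mul_distrib, (hsc.cycleOf_eq (by rw [swap_apply_left]; exact Ne.symm hxy)),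
      (cycleOf_eq_one_iff f).mpr hx, mul_one, card_support_swap hxy]

lemma key_moved {f : Perm α} {x y : α} (hx : f x = x) (hy : f y ≠ y) :
    ∃ rest : Multiset ℕ,
      f.cycleType = ((f.cycleOf y).support.card) ::ₘ rest ∧
      (swap x y * f).cycleType = ((f.cycleOf y).support.card + 1) ::ₘ rest ∧
      ((swap x y * f).cycleOf x).support.card = (f.cycleOf y).support.card + 1 := by
  classical
  have hxy : x ≠ y := by rintro rfl; exact hy hx
  set c := f.cycleOf y with hc
  have hcmem : c ∈ f.cycleFactorsFinset := cycleOf_mem_cycleFactorsFinset_iff.mpr (mem_support.2 hy)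
  have hccyc : c.IsCycle := isCycle_cycleOf f hy
  have hyc : y ∈ c.support := by
    rw [mem_support, hc, cycleOf_apply_self]; exact hy
  have hxc : x ∉ c.support := by
    intro h
    exact (mem_support.mp (support_cycleOf_le f y h)) hx
  set r := f * c⁻¹ with hr
  have hdcr : Disjoint (f * c⁻¹) c := disjoint_mul_inv_of_mem_cycleFactorsFinset hcmem
  have hf : f = c * r := by
    rw [hr, ← hdcr.commute.eq, inv_mul_cancel_right]
  have hrx : r x = x := by
    have hcx : c x = x := notMem_support.mp hxc
    have : (c * r) x = x := by rw [← hf]; exact hx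
    rw [mul_apply] at this
    nth_rewrite 2 [← hcx] at this
    exact c.injective this
  obtain ⟨hcyc', hsupp'⟩ := insert_point_cycle hccyc hyc hxc
  have hdisj' : (swap x y * c).Disjoint r := by
    intro a
    by_cases hra : r a = a
    · exact Or.inr hra
    · left
      have hac : c a = a := ((disjoint_iff_eq_or_eq.mp hdcr.symm) a).resolve_right hra
      have hax : a ≠ x := fun h => hra (h ▸ hrx)
      have hay : a ≠ y := by
        rintro rfl
        exact (Finset.disjoint_left.mp hdcr.disjoint_support) (mem_support.mpr hra) hyc
      rw [mul_apply, hac, swap_apply_of_ne_of_ne hax hay]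
  have hmul : swap x y * f = (swap x y * c) * r := by rw [hf, mul_assoc]
  have hcardc : (swap x y * c).support.card = c.support.card + 1 := by
    rw [hsupp', card_insert_of_notMem hxc]
  refine ⟨r.cycleType, ?_, ?_, ?_⟩
  · rw [hf, (hdcr.symm).cycleType_mul, hccyc.cycleType]
    rfl
  · rw [hmul, hdisj'.cycleType_mul, hcyc'.cycleType, hcardc]
    rfl
  · rw [hmul, hdisj'.cycleOf_mul_distrib, (cycleOf_eq_one_iff r).mpr hrx, mul_one,
      hcyc'.cycleOf_eq (by
        rw [mul_apply, notMem_support.mp hxc, swap_apply_left]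
        exact Ne.symm hxy), hcardc]


lemma cycleOf_conj (π e : Perm α) (x : α) :
    (π * e * π⁻¹).cycleOf (π x) = π * e.cycleOf x * π⁻¹ := by
  classical
  ext b
  rw [cycleOf_apply]
  have hsc : (π * e * π⁻¹).SameCycle (π x) b ↔ e.SameCycle x (π⁻¹ b) := by
    rw [sameCycle_conj]; simp
  simp only [mul_apply, cycleOf_apply]
  by_cases h : e.SameCycle x (π⁻¹ b)
  · rw [if_pos (hsc.mpr h), if_pos h]
  · rw [if_neg (hsc.not.mpr h), if_neg h]
    simp

lemma card_support_cycleOf_conj (π e : Perm α) (x : α) :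
    (((π * e * π⁻¹).cycleOf (π x)).support).card = ((e.cycleOf x).support).card := by
  rw [cycleOf_conj, card_support_conj]

lemma count_point_indep (R : Multiset ℕ → ℕ → Prop) (q q' : α) :
    Nat.card {e : Perm α // R e.cycleType ((e.cycleOf q).support.card)} =
      Nat.card {e : Perm α // R e.cycleType ((e.cycleOf q').support.card)} := by
  classical
  apply Nat.card_congr
  have hinv : ∀ e : Perm α, swap q q' * (swap q q' * e * swap q q') * swap q q' = e := by
    intro e
    rw [← mul_assoc, ← mul_assoc, swap_mul_self, one_mul, mul_assoc, swap_mul_self, mul_one]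
  refine ⟨fun ⟨e, he⟩ => ⟨swap q q' * e * swap q q', ?_⟩,
          fun ⟨e, he⟩ => ⟨swap q q' * e * swap q q', ?_⟩,
          fun ⟨e, he⟩ => Subtype.ext (hinv e), fun ⟨e, he⟩ => Subtype.ext (hinv e)⟩
  · have h3 := card_support_cycleOf_conj (swap q q') e q
    rw [swap_apply_left] at h3
    have h1 : swap q q' * e * swap q q' = swap q q' * e * (swap q q')⁻¹ := by rw [swap_inv]
    rw [h1, cycleType_conj, h3]
    exact he
  · have h3 := card_support_cycleOf_conj (swap q q') e q'
    rw [swap_apply_right] at h3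
    have h1 : swap q q' * e * swap q q' = swap q q' * e * (swap q q')⁻¹ := by rw [swap_inv]
    rw [h1, cycleType_conj, h3]
    exact he

lemma cycleOf_extendDomain {β : Type*} [DecidableEq β] [Fintype β] {p : β → Prop}
    [DecidablePred p] (f : α ≃ Subtype p) (g : Perm α) (a : α) :
    (g.extendDomain f).cycleOf ((f a : Subtype p) : β) =
      (g.cycleOf a).extendDomain f := by
  classical
  ext b
  by_cases hb : p b
  · have hb' : b = ((f (f.symm ⟨b, hb⟩) : Subtype p) : β) := by simp
    rw [hb', cycleOf_apply]
    by_cases h : g.SameCycle a (f.symm ⟨b, hb⟩)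
    · rw [if_pos (sameCycle_extendDomain.mpr h), Perm.extendDomain_apply_image,
        Perm.extendDomain_apply_image, cycleOf_apply, if_pos h]
    · rw [if_neg (fun hc => h (sameCycle_extendDomain.mp hc)),
        Perm.extendDomain_apply_image, cycleOf_apply, if_neg h]
  · rw [cycleOf_apply, Perm.extendDomain_apply_not_subtype _ _ hb]
    split <;> rw [Perm.extendDomain_apply_not_subtype _ _ hb]


/-- `Fin n` is equivalent to the nonzero elements of `Fin (n+1)`. -/
def ι (n : ℕ) : Fin n ≃ {i : Fin (n + 1) // i ≠ 0} where
  toFun x := ⟨x.succ, Fin.succ_ne_zero x⟩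
  invFun i := (i : Fin (n + 1)).pred i.2
  left_inv x := by simp
  right_inv i := by simp

lemma decomposeFin_symm_zero_eq {n : ℕ} (e : Perm (Fin n)) :
    Equiv.Perm.decomposeFin.symm (0, e) = e.extendDomain (ι n) := by
  ext x
  refine Fin.cases ?_ (fun y => ?_) x
  · rw [Equiv.Perm.decomposeFin_symm_apply_zero]
    rw [Perm.extendDomain_apply_not_subtype]
    simp
  · rw [Equiv.Perm.decomposeFin_symm_apply_succ]
    have : (y.succ : Fin (n+1)) = ((ι n y : {i : Fin (n+1) // i ≠ 0}) : Fin (n+1)) := rfl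
    rw [this, Perm.extendDomain_apply_image]
    simp [ι]

lemma decomposeFin_symm_eq {n : ℕ} (p : Fin (n + 1)) (e : Perm (Fin n)) :
    Equiv.Perm.decomposeFin.symm (p, e) =
      Equiv.swap 0 p * e.extendDomain (ι n) := by
  rw [← decomposeFin_symm_zero_eq]
  ext x
  refine Fin.cases ?_ (fun y => ?_) x
  · simp
  · simp only [Equiv.Perm.decomposeFin_symm_apply_succ, mul_apply]
    congr 1

lemma cycleType_extend {n : ℕ} (e : Perm (Fin n)) :
    (e.extendDomain (ι n)).cycleType = e.cycleType :=
  Equiv.Perm.cycleType_extendDomain (ι n)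

lemma extend_apply_zero {n : ℕ} (e : Perm (Fin n)) :
    (e.extendDomain (ι n)) 0 = 0 := by
  rw [Perm.extendDomain_apply_not_subtype]
  simp

lemma extend_apply_succ {n : ℕ} (e : Perm (Fin n)) (q : Fin n) :
    (e.extendDomain (ι n)) q.succ = (e q).succ := by
  have : (q.succ : Fin (n+1)) = ((ι n q : {i : Fin (n+1) // i ≠ 0}) : Fin (n+1)) := rfl
  rw [this, Perm.extendDomain_apply_image]
  rfl

lemma card_cycleOf_extend {n : ℕ} (e : Perm (Fin n)) (q : Fin n) :
    (((e.extendDomain (ι n)).cycleOf q.succ).support).card =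
      ((e.cycleOf q).support).card := by
  have : (q.succ : Fin (n+1)) = ((ι n q : {i : Fin (n+1) // i ≠ 0}) : Fin (n+1)) := rfl
  rw [this, cycleOf_extendDomain, Equiv.Perm.card_support_extend_domain]

end Stmt6

namespace Stmt6
section Counting


noncomputable def aC (n : ℕ) : ℕ := Nat.card {e : Perm (Fin n) // e.cycleType.filter Even = 0}
noncomputable def bC (n : ℕ) : ℕ := Nat.card {e : Perm (Fin n) // e.cycleType.filter Even = {2}}
noncomputable def fC (n : ℕ) : ℕ := Nat.card {e : Perm (Fin (n+1)) //
  Even ((e.cycleOf 0).support.card) ∧ e.cycleType.filter Even = {((e.cycleOf 0).support.card)}}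
noncomputable def gC (n : ℕ) : ℕ := Nat.card {e : Perm (Fin (n+1)) //
  ((e.cycleOf 0).support.card = 0) ∧ e.cycleType.filter Even = 0}
noncomputable def kC (n : ℕ) : ℕ := Nat.card {e : Perm (Fin (n+1)) //
  ((e.cycleOf 0).support.card = 2) ∧ e.cycleType.filter Even = {2}}
noncomputable def hC (n : ℕ) : ℕ := Nat.card {e : Perm (Fin (n+1)) //
  Even ((e.cycleOf 0).support.card) ∧
    e.cycleType.filter Even = 2 ::ₘ {((e.cycleOf 0).support.card)}}

lemma count_step {n : ℕ} (P : Perm (Fin (n+1)) → Prop) :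
    Nat.card {σ : Perm (Fin (n+1)) // P σ} =
      Nat.card {e : Perm (Fin n) // P (Equiv.Perm.decomposeFin.symm (0, e))} +
      ∑ q : Fin n, Nat.card {e : Perm (Fin n) //
        P (Equiv.Perm.decomposeFin.symm (q.succ, e))} := by
  classical
  have e1 : {x : Fin (n+1) × Perm (Fin n) // P (Equiv.Perm.decomposeFin.symm x)} ≃
      {σ : Perm (Fin (n+1)) // P σ} :=
    Equiv.Perm.decomposeFin.symm.subtypeEquiv (fun x => Iff.rfl)
  have e2 : {x : Fin (n+1) × Perm (Fin n) // P (Equiv.Perm.decomposeFin.symm x)} ≃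
      Σ p : Fin (n+1), {e : Perm (Fin n) // P (Equiv.Perm.decomposeFin.symm (p, e))} :=
    Equiv.subtypeProdEquivSigmaSubtype (fun p e => P (Equiv.Perm.decomposeFin.symm (p, e)))
  rw [← Nat.card_congr e1, Nat.card_congr e2]
  rw [Nat.card_eq_fintype_card, Fintype.card_sigma]
  rw [Fin.sum_univ_succ]
  congr 1
  · rw [Nat.card_eq_fintype_card]
  · apply Finset.sum_congr rfl
    intro q _
    rw [Nat.card_eq_fintype_card]

lemma zero_case {n : ℕ} (e : Perm (Fin n)) :
    (Equiv.Perm.decomposeFin.symm (0, e)).cycleType = e.cycleType ∧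
    (((Equiv.Perm.decomposeFin.symm (0, e)).cycleOf 0).support).card = 0 := by
  rw [decomposeFin_symm_zero_eq]
  refine ⟨cycleType_extend e, ?_⟩
  rw [(cycleOf_eq_one_iff _).mpr (extend_apply_zero e)]
  simp

lemma succ_case_fixed {n : ℕ} {e : Perm (Fin n)} {q : Fin n} (hq : e q = q) :
    (Equiv.Perm.decomposeFin.symm (q.succ, e)).cycleType = 2 ::ₘ e.cycleType ∧
    (((Equiv.Perm.decomposeFin.symm (q.succ, e)).cycleOf 0).support).card = 2 := by
  rw [decomposeFin_symm_eq]
  have h1 := key_fixed (f := e.extendDomain (ι n)) (x := (0 : Fin (n+1))) (y := q.succ)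
    (extend_apply_zero e) (by rw [extend_apply_succ, hq]) (Ne.symm (Fin.succ_ne_zero q))
  rw [cycleType_extend] at h1
  exact h1

lemma succ_case_moved {n : ℕ} {e : Perm (Fin n)} {q : Fin n} (hq : e q ≠ q) :
    ∃ rest : Multiset ℕ,
      e.cycleType = ((e.cycleOf q).support.card) ::ₘ rest ∧
      (Equiv.Perm.decomposeFin.symm (q.succ, e)).cycleType
        = ((e.cycleOf q).support.card + 1) ::ₘ rest ∧
      (((Equiv.Perm.decomposeFin.symm (q.succ, e)).cycleOf 0).support).card
        = (e.cycleOf q).support.card + 1 := by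
  rw [decomposeFin_symm_eq]
  have h1 := key_moved (f := e.extendDomain (ι n)) (x := (0 : Fin (n+1))) (y := q.succ)
    (extend_apply_zero e) (by rw [extend_apply_succ]; exact fun h => hq (Fin.succ_injective _ h))
  rw [cycleType_extend, card_cycleOf_extend] at h1
  exact h1

end Counting

end Stmt6
open Equiv Equiv.Perm Finset
namespace Stmt6

lemma card_iff {β : Type*} {p q : β → Prop} (h : ∀ x, p x ↔ q x) :
    Nat.card {x // p x} = Nat.card {x // q x} :=
  Nat.card_congr (Equiv.subtypeEquivRight h)

lemma card_false {β : Type*} {p : β → Prop} (h : ∀ x, ¬ p x) : Nat.card {x // p x} = 0 := by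
  haveI : IsEmpty {x // p x} := ⟨fun ⟨x, hx⟩ => h x hx⟩
  exact Nat.card_of_isEmpty

lemma card_or {β : Type*} [Finite β] {p q : β → Prop} (h : ∀ x, ¬ (p x ∧ q x)) :
    Nat.card {x // p x ∨ q x} = Nat.card {x // p x} + Nat.card {x // q x} := by
  classical
  haveI := Fintype.ofFinite β
  have hd : Disjoint p q := by
    intro r hrp hrq x hx
    exact (h x ⟨hrp x hx, hrq x hx⟩).elim
  rw [Nat.card_congr (subtypeOrEquiv p q hd), Nat.card_sum]

lemma card_cycleOf_zero_iff {β : Type*} [DecidableEq β] [Fintype β] (e : Perm β) (q : β) :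
    (e.cycleOf q).support.card = 0 ↔ e q = q := by
  rw [Finset.card_eq_zero, support_cycleOf_eq_nil_iff]
  exact notMem_support

lemma card_cycleOf_mem {β : Type*} [DecidableEq β] [Fintype β] {e : Perm β} {q : β}
    (hq : e q ≠ q) : (e.cycleOf q).support.card ∈ e.cycleType := by
  rw [cycleType_def]
  exact Multiset.mem_map.mpr ⟨e.cycleOf q,
    Finset.mem_val.mpr (cycleOf_mem_cycleFactorsFinset_iff.mpr (mem_support.mpr hq)), rfl⟩

lemma zero_notin_cycleType {β : Type*} [DecidableEq β] [Fintype β] (e : Perm β) :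
    (0 : ℕ) ∉ e.cycleType := fun h => by
  have := two_le_of_mem_cycleType h; omega

lemma zero_notin_filter {β : Type*} [DecidableEq β] [Fintype β] (e : Perm β) :
    (0 : ℕ) ∉ e.cycleType.filter Even := fun h =>
  zero_notin_cycleType e (Multiset.mem_of_mem_filter h)

lemma recursion_core {n : ℕ} (P : Perm (Fin (n+2)) → Prop)
    (P₀ : Perm (Fin (n+1)) → Prop) (R : Multiset ℕ → ℕ → Prop)
    (h0 : ∀ e : Perm (Fin (n+1)), P (Equiv.Perm.decomposeFin.symm (0, e)) ↔ P₀ e)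
    (hs : ∀ (q : Fin (n+1)) (e : Perm (Fin (n+1))),
      P (Equiv.Perm.decomposeFin.symm (q.succ, e)) ↔
        R e.cycleType ((e.cycleOf q).support.card)) :
    Nat.card {σ : Perm (Fin (n+2)) // P σ} =
      Nat.card {e : Perm (Fin (n+1)) // P₀ e} +
        (n+1) * Nat.card {e : Perm (Fin (n+1)) //
          R e.cycleType ((e.cycleOf 0).support.card)} := by
  rw [count_step P, card_iff h0]
  congr 1
  have hq : ∀ q : Fin (n+1),
      Nat.card {e : Perm (Fin (n+1)) // P (Equiv.Perm.decomposeFin.symm (q.succ, e))} =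
      Nat.card {e : Perm (Fin (n+1)) // R e.cycleType ((e.cycleOf 0).support.card)} :=
    fun q => (card_iff (hs q)).trans (count_point_indep R q 0)
  rw [Finset.sum_congr rfl fun q _ => hq q, Finset.sum_const, Finset.card_univ,
    Fintype.card_fin, smul_eq_mul]

end Stmt6
open Equiv Equiv.Perm Finset
namespace Stmt6


lemma cons_singleton_swap {a b : ℕ} : a ::ₘ ({b} : Multiset ℕ) = b ::ₘ {a} := by
  rw [← Multiset.cons_zero b, ← Multiset.cons_zero a, Multiset.cons_swap]

lemma cons_eq_pair_iff {m : ℕ} {s : Multiset ℕ} : (m ::ₘ s = 2 ::ₘ {m}) ↔ s = {2} := by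
  rw [show (2 ::ₘ ({m} : Multiset ℕ)) = m ::ₘ {2} from cons_singleton_swap,
    Multiset.cons_inj_right]

lemma gC_eq (n : ℕ) : gC n = aC n := by
  refine (count_step (n := n)
    (fun σ => ((σ.cycleOf 0).support.card = 0) ∧ σ.cycleType.filter Even = 0)).trans ?_
  have h0 : ∀ e : Perm (Fin n),
      ((((Equiv.Perm.decomposeFin.symm (0, e)).cycleOf 0).support.card = 0) ∧
        (Equiv.Perm.decomposeFin.symm (0, e)).cycleType.filter Even = 0) ↔
      (e.cycleType.filter Even = 0) := by
    intro e
    obtain ⟨h1, h2⟩ := zero_case e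
    rw [h1, h2]
    simp
  have hz : ∀ q : Fin n, Nat.card {e : Perm (Fin n) //
      (((Equiv.Perm.decomposeFin.symm (q.succ, e)).cycleOf 0).support.card = 0) ∧
        (Equiv.Perm.decomposeFin.symm (q.succ, e)).cycleType.filter Even = 0} = 0 := by
    intro q
    apply card_false
    rintro e ⟨hc, -⟩
    by_cases hq : e q = q
    · rw [(succ_case_fixed hq).2] at hc; omega
    · obtain ⟨rest, h1, h2, h3⟩ := succ_case_moved hq
      rw [h3] at hc; omega
  rw [card_iff h0, Finset.sum_congr rfl fun q _ => hz q, Finset.sum_const, smul_zero, add_zero]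
  rfl

lemma aC_rec (n : ℕ) : aC (n+2) = aC (n+1) + (n+1) * fC n := by
  refine (recursion_core
    (fun σ => σ.cycleType.filter Even = 0)
    (fun e => e.cycleType.filter Even = 0)
    (fun t c => Even c ∧ t.filter Even = {c}) ?_ ?_).trans rfl
  · intro e
    beta_reduce
    rw [(zero_case e).1]
  · intro q e
    beta_reduce
    by_cases hq : e q = q
    · obtain ⟨h1, h2⟩ := succ_case_fixed hq
      have hc0 : (e.cycleOf q).support.card = 0 := (card_cycleOf_zero_iff e q).mpr hq
      rw [h1, hc0, Multiset.filter_cons_of_pos _ even_two]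
      constructor
      · intro h; exact absurd h (Multiset.cons_ne_zero)
      · rintro ⟨-, hf⟩
        exact absurd (hf ▸ Multiset.mem_singleton_self 0) (zero_notin_filter e)
    · obtain ⟨rest, h1, h2, h3⟩ := succ_case_moved hq
      have hm2 : 2 ≤ (e.cycleOf q).support.card :=
        two_le_of_mem_cycleType (by rw [h1]; exact Multiset.mem_cons_self _ _)
      rw [h2, h1]
      by_cases hev : Even ((e.cycleOf q).support.card)
      · rw [Multiset.filter_cons_of_neg _ (by simp [Nat.even_add_one, hev]),
          Multiset.filter_cons_of_pos _ hev]
        constructor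
        · intro h; exact ⟨hev, by rw [h, Multiset.cons_zero]⟩
        · rintro ⟨-, hf⟩
          rw [← Multiset.cons_zero ((e.cycleOf q).support.card)] at hf
          exact (Multiset.cons_inj_right _).mp hf
      · rw [Multiset.filter_cons_of_pos _ (Nat.even_add_one.mpr hev),
          Multiset.filter_cons_of_neg _ hev]
        constructor
        · intro h; exact absurd h (Multiset.cons_ne_zero)
        · rintro ⟨hev', -⟩; exact absurd hev' hev

lemma fC_rec (n : ℕ) : fC (n+1) = (n+1) * aC (n+1) := by
  have h := recursion_core (n := n)
    (fun σ => Even ((σ.cycleOf 0).support.card) ∧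
      σ.cycleType.filter Even = {((σ.cycleOf 0).support.card)})
    (fun _ => False)
    (fun t _ => t.filter Even = 0) ?_ ?_
  · rw [card_false (fun _ h => h), zero_add] at h
    exact h
  · intro e
    beta_reduce
    obtain ⟨h1, h2⟩ := zero_case e
    rw [h1, h2]
    simp only [iff_false, not_and]
    intro _
    intro hf
    exact absurd (hf ▸ Multiset.mem_singleton_self 0) (zero_notin_filter e)
  · intro q e
    beta_reduce
    by_cases hq : e q = q
    · obtain ⟨h1, h2⟩ := succ_case_fixed hq
      rw [h1, h2, Multiset.filter_cons_of_pos _ even_two]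
      constructor
      · rintro ⟨-, hf⟩
        rw [← Multiset.cons_zero 2] at hf
        exact (Multiset.cons_inj_right _).mp hf
      · intro h; exact ⟨even_two, by rw [h, Multiset.cons_zero]⟩
    · obtain ⟨rest, h1, h2, h3⟩ := succ_case_moved hq
      rw [h2, h1, h3]
      by_cases hev : Even ((e.cycleOf q).support.card)
      · rw [Multiset.filter_cons_of_pos _ hev]
        constructor
        · rintro ⟨hev', -⟩
          exact absurd hev' (by simp [Nat.even_add_one, hev])
        · intro h; exact absurd h (Multiset.cons_ne_zero)
      · rw [Multiset.filter_cons_of_neg _ hev,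
          Multiset.filter_cons_of_pos _ (Nat.even_add_one.mpr hev)]
        constructor
        · rintro ⟨-, hf⟩
          rw [← Multiset.cons_zero ((e.cycleOf q).support.card + 1)] at hf
          exact (Multiset.cons_inj_right _).mp hf
        · intro h
          exact ⟨Nat.even_add_one.mpr hev, by rw [h, Multiset.cons_zero]⟩

lemma kC_rec (n : ℕ) : kC (n+1) = (n+1) * gC n := by
  have h := recursion_core (n := n)
    (fun σ => ((σ.cycleOf 0).support.card = 2) ∧ σ.cycleType.filter Even = {2})
    (fun _ => False)
    (fun t c => c = 0 ∧ t.filter Even = 0) ?_ ?_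
  · rw [card_false (fun _ h => h), zero_add] at h
    exact h
  · intro e
    beta_reduce
    obtain ⟨h1, h2⟩ := zero_case e
    rw [h1, h2]
    simp
  · intro q e
    beta_reduce
    by_cases hq : e q = q
    · obtain ⟨h1, h2⟩ := succ_case_fixed hq
      have hc0 : (e.cycleOf q).support.card = 0 := (card_cycleOf_zero_iff e q).mpr hq
      rw [h1, h2, hc0, Multiset.filter_cons_of_pos _ even_two]
      constructor
      · rintro ⟨-, hf⟩
        rw [← Multiset.cons_zero 2] at hf
        exact ⟨rfl, (Multiset.cons_inj_right _).mp hf⟩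
      · rintro ⟨-, hf⟩
        exact ⟨rfl, by rw [hf, Multiset.cons_zero]⟩
    · obtain ⟨rest, h1, h2, h3⟩ := succ_case_moved hq
      have hm2 : 2 ≤ (e.cycleOf q).support.card :=
        two_le_of_mem_cycleType (by rw [h1]; exact Multiset.mem_cons_self _ _)
      rw [h3]
      constructor
      · rintro ⟨hc, -⟩; omega
      · rintro ⟨hc, -⟩; omega

lemma bC_rec (n : ℕ) : bC (n+2) = bC (n+1) + (n+1) * (gC n + hC n) := by
  have h := recursion_core (n := n)
    (fun σ => σ.cycleType.filter Even = {2})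
    (fun e => e.cycleType.filter Even = {2})
    (fun t c => (c = 0 ∧ t.filter Even = 0) ∨
      (Even c ∧ t.filter Even = 2 ::ₘ {c})) ?_ ?_
  · refine h.trans ?_
    congr 1
    congr 1
    refine (card_or ?_).trans rfl
    rintro e ⟨⟨-, hf0⟩, ⟨-, hf2⟩⟩
    rw [hf0] at hf2
    exact Multiset.cons_ne_zero hf2.symm
  · intro e
    beta_reduce
    rw [(zero_case e).1]
  · intro q e
    beta_reduce
    by_cases hq : e q = q
    · obtain ⟨h1, h2⟩ := succ_case_fixed hq
      have hc0 : (e.cycleOf q).support.card = 0 := (card_cycleOf_zero_iff e q).mpr hq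
      rw [h1, hc0, Multiset.filter_cons_of_pos _ even_two]
      constructor
      · intro hf
        rw [← Multiset.cons_zero 2] at hf
        exact Or.inl ⟨rfl, (Multiset.cons_inj_right _).mp hf⟩
      · rintro (⟨-, hf⟩ | ⟨-, hf⟩)
        · rw [hf, Multiset.cons_zero]
        · exact absurd (hf ▸ (by simp : (0:ℕ) ∈ (2 ::ₘ ({0} : Multiset ℕ))))
            (zero_notin_filter e)
    · obtain ⟨rest, h1, h2, h3⟩ := succ_case_moved hq
      have hm2 : 2 ≤ (e.cycleOf q).support.card :=
        two_le_of_mem_cycleType (by rw [h1]; exact Multiset.mem_cons_self _ _)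
      rw [h2, h1]
      by_cases hev : Even ((e.cycleOf q).support.card)
      · rw [Multiset.filter_cons_of_neg _ (by simp [Nat.even_add_one, hev]),
          Multiset.filter_cons_of_pos _ hev]
        constructor
        · intro hf
          exact Or.inr ⟨hev, cons_eq_pair_iff.mpr hf⟩
        · rintro (⟨hc, -⟩ | ⟨-, hf⟩)
          · omega
          · exact cons_eq_pair_iff.mp hf
      · rw [Multiset.filter_cons_of_pos _ (Nat.even_add_one.mpr hev),
          Multiset.filter_cons_of_neg _ hev]
        constructor
        · intro hf
          have := (Multiset.singleton_eq_cons_iff _).mp hf.symm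
          omega
        · rintro (⟨hc, -⟩ | ⟨hev', -⟩)
          · omega
          · exact absurd hev' hev

lemma hC_rec (n : ℕ) : hC (n+1) + (n+1) * kC n = (n+1) * bC (n+1) := by
  have h := recursion_core (n := n)
    (fun σ => Even ((σ.cycleOf 0).support.card) ∧
      σ.cycleType.filter Even = 2 ::ₘ {((σ.cycleOf 0).support.card)})
    (fun _ => False)
    (fun t c => (c = 0 ∨ ¬ Even c) ∧ t.filter Even = {2}) ?_ ?_
  · rw [card_false (fun _ h => h), zero_add] at h
    have hsplit : Nat.card {e : Perm (Fin (n+1)) //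
        (((e.cycleOf 0).support.card = 0 ∨ ¬ Even ((e.cycleOf 0).support.card)) ∧
          e.cycleType.filter Even = {2})} + kC n = bC (n+1) := by
      refine ((card_or ?_).symm.trans ?_)
      · rintro e ⟨⟨hc, hf2⟩, hc2, -⟩
        rw [hc2] at hc
        rcases hc with hc | hc
        · omega
        · exact hc even_two
      · apply card_iff
        intro e
        constructor
        · rintro (⟨-, hf⟩ | ⟨-, hf⟩) <;> exact hf
        · intro hf
          by_cases hc : (e.cycleOf 0).support.card = 0
          · exact Or.inl ⟨Or.inl hc, hf⟩
          · by_cases hev : Even ((e.cycleOf 0).support.card)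
            · refine Or.inr ⟨?_, hf⟩
              have hmem : (e.cycleOf 0).support.card ∈ e.cycleType :=
                card_cycleOf_mem (fun hfix => hc ((card_cycleOf_zero_iff e 0).mpr hfix))
              have : (e.cycleOf 0).support.card ∈ e.cycleType.filter Even :=
                Multiset.mem_filter.mpr ⟨hmem, hev⟩
              rw [hf] at this
              simpa using this
            · exact Or.inl ⟨Or.inr hev, hf⟩
    have h' : hC (n + 1) = (n+1) * Nat.card {e : Perm (Fin (n+1)) //
        (((e.cycleOf 0).support.card = 0 ∨ ¬ Even ((e.cycleOf 0).support.card)) ∧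
          e.cycleType.filter Even = {2})} := h
    rw [h', ← hsplit]
    ring
  · intro e
    beta_reduce
    obtain ⟨h1, h2⟩ := zero_case e
    rw [h1, h2]
    simp only [iff_false, not_and]
    intro _ hf
    exact absurd (hf ▸ (by simp : (0:ℕ) ∈ (2 ::ₘ ({0} : Multiset ℕ)))) (zero_notin_filter e)
  · intro q e
    beta_reduce
    by_cases hq : e q = q
    · obtain ⟨h1, h2⟩ := succ_case_fixed hq
      have hc0 : (e.cycleOf q).support.card = 0 := (card_cycleOf_zero_iff e q).mpr hq
      rw [h1, h2, hc0, Multiset.filter_cons_of_pos _ even_two]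
      constructor
      · rintro ⟨-, hf⟩
        exact ⟨Or.inl rfl, (Multiset.cons_inj_right _).mp hf⟩
      · rintro ⟨-, hf⟩
        exact ⟨even_two, by rw [hf]⟩
    · obtain ⟨rest, h1, h2, h3⟩ := succ_case_moved hq
      have hm2 : 2 ≤ (e.cycleOf q).support.card :=
        two_le_of_mem_cycleType (by rw [h1]; exact Multiset.mem_cons_self _ _)
      rw [h2, h1, h3]
      by_cases hev : Even ((e.cycleOf q).support.card)
      · constructor
        · rintro ⟨hev', -⟩
          exact absurd hev' (by simp [Nat.even_add_one, hev])
        · rintro ⟨hc, -⟩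
          rcases hc with hc | hc
          · omega
          · exact absurd hev hc
      · rw [Multiset.filter_cons_of_pos _ (Nat.even_add_one.mpr hev),
          Multiset.filter_cons_of_neg _ hev]
        constructor
        · rintro ⟨-, hf⟩
          exact ⟨Or.inr hev, cons_eq_pair_iff.mp hf⟩
        · rintro ⟨-, hf⟩
          exact ⟨Nat.even_add_one.mpr hev, cons_eq_pair_iff.mpr hf⟩

end Stmt6
open Equiv Equiv.Perm Finset
namespace Stmt6

lemma perm_fin_zero_eq_one (e : Perm (Fin 0)) : e = 1 :=
  Equiv.ext fun x => x.elim0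

lemma perm_fin_one_eq_one (e : Perm (Fin 1)) : e = 1 :=
  Equiv.ext fun x => Subsingleton.elim _ _

lemma aC_zero : aC 0 = 1 := by
  haveI : Unique {e : Perm (Fin 0) // e.cycleType.filter Even = 0} :=
    { default := ⟨1, by simp⟩,
      uniq := fun a => Subtype.ext (perm_fin_zero_eq_one _) }
  exact Nat.card_unique

lemma aC_one : aC 1 = 1 := by
  haveI : Unique {e : Perm (Fin 1) // e.cycleType.filter Even = 0} :=
    { default := ⟨1, by simp⟩,
      uniq := fun a => Subtype.ext (perm_fin_one_eq_one _) }
  exact Nat.card_unique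

lemma bC_one : bC 1 = 0 := by
  apply card_false
  intro e h
  rw [perm_fin_one_eq_one e, cycleType_one] at h
  simp at h

lemma fC_zero : fC 0 = 0 := by
  apply card_false
  rintro e ⟨-, hf⟩
  rw [perm_fin_one_eq_one e, cycleType_one] at hf
  simp at hf

lemma kC_zero : kC 0 = 0 := by
  apply card_false
  rintro e ⟨hc, -⟩
  rw [perm_fin_one_eq_one e] at hc
  simp [cycleOf_one] at hc

lemma hC_zero : hC 0 = 0 := by
  apply card_false
  rintro e ⟨-, hf⟩
  rw [perm_fin_one_eq_one e, cycleType_one] at hf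
  simp at hf

lemma fC_eq (n : ℕ) : fC n = n * aC n := by
  cases n with
  | zero => simp [fC_zero]
  | succ n => rw [fC_rec]

lemma aC_rec2 (n : ℕ) : aC (n+2) = aC (n+1) + (n+1) * n * aC n := by
  rw [aC_rec, fC_eq, mul_assoc]

lemma kC_eq (n : ℕ) : kC (n+1) = (n+1) * aC n := by
  rw [kC_rec, gC_eq]

open scoped Nat in
lemma doubleFact_odd_step (m : ℕ) : (2*m+1)‼ = (2*m+1) * ((2*m-1)‼) := by
  cases m with
  | zero => simp
  | succ m =>
    have h1 : 2*(m+1)+1 = (2*m+1)+2 := by ring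
    have h2 : 2*(m+1)-1 = 2*m+1 := by omega
    rw [h1, h2, Nat.doubleFactorial_add_two]

open scoped Nat in
lemma aC_closed : ∀ m : ℕ, aC (2*m) = ((2*m-1)‼)^2 ∧ aC (2*m+1) = (2*m+1) * ((2*m-1)‼)^2 := by
  intro m
  induction m with
  | zero => simp [aC_zero, aC_one]
  | succ m ih =>
    obtain ⟨ha0, ha1⟩ := ih
    have key : aC (2*m+2) = ((2*(m+1)-1)‼)^2 := by
      rw [aC_rec2, ha0, ha1, show 2*(m+1)-1 = 2*m+1 from by omega, doubleFact_odd_step]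
      ring
    constructor
    · rw [show 2*(m+1) = 2*m+2 from by ring]
      exact key
    · rw [show 2*(m+1)+1 = (2*m+1)+2 from by ring, aC_rec2, ha1,
        show (2*m+1)+1 = 2*m+2 from rfl, key,
        show 2*(m+1)-1 = 2*m+1 from by omega, doubleFact_odd_step]
      ring

end Stmt6
open Equiv Equiv.Perm Finset
open scoped Nat
namespace Stmt6

lemma kC_even (m : ℕ) : kC (2*m) = 2*m * aC (2*m-1) := by
  cases m with
  | zero => simp [kC_zero]
  | succ m =>
    rw [show 2*(m+1) = (2*m+1)+1 from by ring, kC_eq,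
      show (2*m+1)+1-1 = 2*m+1 from by omega]

lemma m_mul_sq (m : ℕ) : m * ((2*m-1)‼)^2 = m * ((2*m-1)^2 * ((2*m-3)‼)^2) := by
  cases m with
  | zero => simp
  | succ m =>
    rw [show 2*(m+1)-1 = 2*m+1 from by omega, show 2*(m+1)-3 = 2*m-1 from by omega,
      doubleFact_odd_step]
    ring

lemma bC_two : bC 2 = 1 := by
  rw [show (2:ℕ) = 0+2 from rfl, bC_rec, bC_one, gC_eq, aC_zero, hC_zero]

lemma bC_closed : ∀ m : ℕ, bC (2*m+1) = (2*m+1) * m * (2*m-1) * ((2*m-3)‼)^2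
    ∧ bC (2*m+2) = (m+1) * (2*m+1) * ((2*m-1)‼)^2 := by
  intro m
  induction m with
  | zero =>
    constructor
    · simp [bC_one]
    · simpa using bC_two
  | succ m ih =>
    obtain ⟨hb1, hb2⟩ := ih
    have ha0 := (aC_closed m).1
    have ha1 := (aC_closed m).2
    have hk0' : kC (2*m) = 2*m * ((2*m-1) * ((2*m-3)‼)^2) := by
      cases m with
      | zero => simpa using kC_even 0
      | succ m' =>
        rw [kC_even, show 2*(m'+1)-1 = 2*m'+1 from by omega, (aC_closed m').2,
          show 2*(m'+1)-3 = 2*m'-1 from by omega]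
    have hh1' : hC (2*m+1) = (2*m+1) * (m * ((2*m-1)‼)^2) := by
      have hrel : hC (2*m+1) + (2*m+1) * kC (2*m) = (2*m+1) * bC (2*m+1) := hC_rec (2*m)
      have hclaim : (2*m+1) * (m * ((2*m-1)‼)^2) + (2*m+1) * kC (2*m)
          = (2*m+1) * bC (2*m+1) := by
        rw [hk0', hb1]
        cases m with
        | zero => simp
        | succ m' =>
          rw [show 2*(m'+1)-1 = 2*m'+1 from by omega,
            show 2*(m'+1)-3 = 2*m'-1 from by omega, doubleFact_odd_step]
          ring
      omega
    have hb3 : bC (2*m+3) = (2*m+3) * ((m+1) * ((2*m+1) * ((2*m-1)‼)^2)) := by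
      rw [show 2*m+3 = (2*m+1)+2 from by ring, bC_rec, gC_eq, ha1, hh1',
        show (2*m+1)+1 = 2*m+2 from rfl, hb2]
      ring
    have hh2' : hC (2*m+2) = (2*m+2) * (m * ((2*m+1) * ((2*m-1)‼)^2)) := by
      have hrel : hC (2*m+2) + (2*m+2) * kC (2*m+1) = (2*m+2) * bC (2*m+2) :=
        hC_rec (2*m+1)
      have hkk : kC (2*m+1) = (2*m+1) * aC (2*m) := kC_eq (2*m)
      have hclaim : (2*m+2) * (m * ((2*m+1) * ((2*m-1)‼)^2)) + (2*m+2) * kC (2*m+1)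
          = (2*m+2) * bC (2*m+2) := by
        rw [hkk, ha0, hb2]
        ring
      omega
    have ha2 : aC (2*m+2) = ((2*m+1) * ((2*m-1)‼))^2 := by
      have := (aC_closed (m+1)).1
      rw [show 2*(m+1) = 2*m+2 from by ring] at this
      rw [show 2*m+2-1 = 2*m+1 from by omega, doubleFact_odd_step] at this
      exact this
    have hb4 : bC (2*m+4) = (m+2) * ((2*m+3) * ((2*m+1) * ((2*m-1)‼))^2) := by
      rw [show 2*m+4 = (2*m+2)+2 from by ring, bC_rec, gC_eq,
        show (2*m+2)+1 = 2*m+3 from rfl, hb3, ha2, hh2']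
      ring
    constructor
    · rw [show 2*(m+1)+1 = 2*m+3 from by omega, show 2*(m+1)-1 = 2*m+1 from by omega,
        show 2*(m+1)-3 = 2*m-1 from by omega, hb3]
      ring
    · rw [show 2*(m+1)+2 = 2*m+4 from by omega, show 2*(m+1)-1 = 2*m+1 from by omega,
        show m+1+1 = m+2 from rfl, hb4, doubleFact_odd_step]
      ring

end Stmt6
open Equiv Equiv.Perm Finset
open scoped Nat
namespace Stmt6

lemma sqFact : ∀ k : ℕ, 1 ≤ k → ((2*k)‼)^2 ≤ 4 * k * ((2*k-1)‼)^2 := by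
  intro k
  induction k with
  | zero => omega
  | succ k ih =>
    intro _
    cases k with
    | zero => decide
    | succ k' =>
      have hk : 1 ≤ k'+1 := by omega
      have ih' := ih hk
      set k := k'+1
      rw [show 2*(k+1) = 2*k+2 from by ring, Nat.doubleFactorial_add_two,
        show 2*k+2-1 = 2*k+1 from by omega, doubleFact_odd_step]
      have hexp : ((2*k+2) * (2*k)‼)^2 = (2*k+2)^2 * ((2*k)‼)^2 := by ring
      rw [hexp]
      have h1 : (2*k+2)^2 * ((2*k)‼)^2 ≤ (2*k+2)^2 * (4*k*((2*k-1)‼)^2) :=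
        Nat.mul_le_mul_left _ ih'
      refine h1.trans ?_
      have hcoef : (2*k+2)^2 * (4*k) ≤ 4*(k+1) * (2*k+1)^2 := by nlinarith
      calc (2*k+2)^2 * (4*k*((2*k-1)‼)^2) = ((2*k+2)^2 * (4*k)) * ((2*k-1)‼)^2 := by ring
        _ ≤ (4*(k+1) * (2*k+1)^2) * ((2*k-1)‼)^2 := Nat.mul_le_mul_right _ hcoef
        _ = 4*(k+1) * ((2*k+1) * (2*k-1)‼)^2 := by ring

lemma fact_eq_dfact (j : ℕ) : (2*j)! = (2*j)‼ * (2*j-1)‼ := by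
  cases j with
  | zero => rfl
  | succ j' =>
    rw [show 2*(j'+1) = (2*j'+1)+1 from by ring, Nat.factorial_eq_mul_doubleFactorial,
      show (2*j'+1)+1-1 = 2*j'+1 from by omega]

lemma key_nat_ineq {d j : ℕ} (hd3 : 3 ≤ d) (hdj : 2*j+2 ≤ d) :
    ((2*j)‼)^2 < 4 * d * ((2*j-1)‼)^2 := by
  have hY : 0 < ((2*j-1)‼) := Nat.doubleFactorial_pos _
  cases j with
  | zero => simpa using by omega
  | succ j' =>
    have h1 := sqFact (j'+1) (by omega)
    refine h1.trans_lt ?_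
    have : 4*(j'+1) < 4*d := by omega
    exact Nat.mul_lt_mul_of_lt_of_le this (le_refl _) (by positivity)

lemma final_ineq {d j : ℕ} (hd3 : 3 ≤ d) (hdj : 2*j+2 ≤ d) :
    1 / (4 * Real.sqrt d) < ((2*j-1)‼ : ℝ)^2 / (2 * ((2*j)! : ℝ)) := by
  have hnat := key_nat_ineq hd3 hdj
  have hnat2 : (2*((2*j)!))^2 < (4*((2*j-1)‼)^2)^2 * d := by
    rw [fact_eq_dfact]
    have hY : 0 < ((2*j-1)‼) := Nat.doubleFactorial_pos _
    nlinarith [hnat, hY, sq_nonneg ((2*j)‼), sq_nonneg ((2*j-1)‼)]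
  have h0d : (0:ℝ) < d := by exact_mod_cast (by omega : 0 < d)
  have hs : 0 < Real.sqrt d := Real.sqrt_pos.mpr h0d
  have hs2 : Real.sqrt d ^ 2 = d := Real.sq_sqrt h0d.le
  have hfa : (0:ℝ) < 2 * ((2*j)! : ℝ) := by positivity
  rw [div_lt_div_iff₀ (by positivity) hfa]
  have hcast : (2*((2*j)! : ℝ))^2 < (4*((2*j-1)‼ : ℝ)^2)^2 * d := by exact_mod_cast hnat2
  nlinarith [hcast, hs, hs2, hfa,
    mul_pos (show (0:ℝ) < 4*((2*j-1)‼:ℝ)^2 by positivity) hs]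

end Stmt6
open scoped Nat

/-- Let d > 2 and let e = d̃ be the largest even integer with e ≤ d.  The proportion
in S_d of permutations having exactly one 2-cycle and all other cycles of odd length
equals ((e-3)!!)² / (2·(e-2)!), and this quantity is > 1/(4√d). -/
theorem stmt_6 (d e : ℕ) (hd : 2 < d) (he : Even e) (hle : e ≤ d) (hmax : d ≤ e + 1) :
    (({σ : Equiv.Perm (Fin d) | σ.cycleType.filter Even = {2}}.ncard : ℝ)
        / d.factorial
      = (Nat.doubleFactorial (e - 3) : ℝ) ^ 2 / (2 * (e - 2).factorial)) ∧
    ((Nat.doubleFactorial (e - 3) : ℝ) ^ 2 / (2 * (e - 2).factorial)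
      > 1 / (4 * Real.sqrt d)) := by
  obtain ⟨m, hm⟩ := he
  have he2 : 2 ≤ e := by omega
  set j := m - 1 with hj
  have hej : e = 2*j + 2 := by omega
  have hbd : Stmt6.bC d * (2 * (2*j)!) = ((2*j-1)‼)^2 * d ! := by
    rcases (by omega : d = 2*j+2 ∨ d = 2*j+3) with rfl | rfl
    · rw [(Stmt6.bC_closed j).2,
        show (2*j+2)! = (2*j+2)*((2*j+1)*(2*j)!) from by
          rw [show 2*j+2 = (2*j+1)+1 from rfl, Nat.factorial_succ,
            show 2*j+1 = (2*j)+1 from rfl, Nat.factorial_succ]]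
      ring
    · have hb := (Stmt6.bC_closed (j+1)).1
      rw [show 2*(j+1)+1 = 2*j+3 from by omega, show 2*(j+1)-1 = 2*j+1 from by omega,
        show 2*(j+1)-3 = 2*j-1 from by omega, show (j+1 : ℕ) = j+1 from rfl] at hb
      rw [hb,
        show (2*j+3)! = (2*j+3)*((2*j+2)*((2*j+1)*(2*j)!)) from by
          rw [show 2*j+3 = (2*j+2)+1 from rfl, Nat.factorial_succ,
            show 2*j+2 = (2*j+1)+1 from rfl, Nat.factorial_succ,
            show 2*j+1 = (2*j)+1 from rfl, Nat.factorial_succ]]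
      ring
  have hset : ({σ : Equiv.Perm (Fin d) | σ.cycleType.filter Even = {2}}.ncard) = Stmt6.bC d := by
    rw [← Nat.card_coe_set_eq]
    rfl
  have he3 : e - 3 = 2*j - 1 := by omega
  have he4 : e - 2 = 2*j := by omega
  constructor
  · rw [hset, he3, he4]
    rw [div_eq_div_iff (by positivity) (by positivity)]
    push_cast
    exact_mod_cast hbd
  · rw [he3, he4]
    exact Stmt6.final_ineq (by omega) (by omega)
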